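/- arXiv:math/0205086 — 8 statements merged into one kernel-verified Lean document; each statement's English description precedes it below -/
import Mathlib

section
/- For any distance matrix r of order n and any a, b ∈ A(r), the inequality max_i |a_i - b_i| ≤ min_j (a_j + b_j) holds (so the interval [max_i |a_i - b_i|, min_j (a_j + b_j)] of possible amalgamation distances is nonempty). -/
/-- A distance matrix of order `n`: symmetric, zero diagonal, nonnegative,
satisfying all triangle inequalities. -/
def IsDistMatrix {n : ℕ} (r : Fin n → Fin n → ℝ) : Prop :=
  (∀ i, r i i = 0) ∧ (∀ i j, r i j = r j i) ∧ (∀ i j, 0 ≤ r i j) ∧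
  (∀ i j k, r i j ≤ r i k + r k j)

/-- `a` is an admissible vector for the distance matrix `r`. -/
def Admissible {n : ℕ} (r : Fin n → Fin n → ℝ) (a : Fin n → ℝ) : Prop :=
  ∀ i j, |a i - a j| ≤ r i j ∧ r i j ≤ a i + a j

theorem stmt9 {n : ℕ} (r : Fin n → Fin n → ℝ) (hr : IsDistMatrix r)
    (a b : Fin n → ℝ) (ha : Admissible r a) (hb : Admissible r b) :
    ∀ i j, |a i - b i| ≤ a j + b j := by
  intro i j
  have h1 := (ha i j).1
  have h2 := (ha i j).2
  have h3 := (hb i j).1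
  have h4 := (hb i j).2
  rw [abs_sub_le_iff] at h1 h3 ⊢
  constructor <;> linarith [h1.1, h1.2, h3.1, h3.2]
end

section
/- (Projection of admissible vectors is surjective, one step) Let r be a distance matrix of order n and a ∈ A(r), giving the extended matrix r^a of order n+1. Then the coordinate projection (b_1,...,b_n,b_{n+1}) ↦ (b_1,...,b_n) maps A(r^a) onto A(r): for every b ∈ A(r) there exists h ≥ 0 with (b_1,...,b_n,h) ∈ A(r^a). -/
/-- The matrix `r^a` obtained by appending `a` as last row and column. -/
def extendMatrix {n : ℕ} (r : Fin n → Fin n → ℝ) (a : Fin n → ℝ) :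
    Fin (n + 1) → Fin (n + 1) → ℝ := fun i j =>
  if hi : (i : ℕ) < n then
    if hj : (j : ℕ) < n then r ⟨i, hi⟩ ⟨j, hj⟩ else a ⟨i, hi⟩
  else
    if hj : (j : ℕ) < n then a ⟨j, hj⟩ else 0

lemma ext_cc {n : ℕ} (r : Fin n → Fin n → ℝ) (a : Fin n → ℝ) (i j : Fin n) :
    extendMatrix r a i.castSucc j.castSucc = r i j := by
  simp [extendMatrix, i.isLt, j.isLt]

lemma ext_cl {n : ℕ} (r : Fin n → Fin n → ℝ) (a : Fin n → ℝ) (i : Fin n) :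
    extendMatrix r a i.castSucc (Fin.last n) = a i := by
  simp [extendMatrix, i.isLt]

lemma ext_lc {n : ℕ} (r : Fin n → Fin n → ℝ) (a : Fin n → ℝ) (j : Fin n) :
    extendMatrix r a (Fin.last n) j.castSucc = a j := by
  simp [extendMatrix, j.isLt]

lemma ext_ll {n : ℕ} (r : Fin n → Fin n → ℝ) (a : Fin n → ℝ) :
    extendMatrix r a (Fin.last n) (Fin.last n) = 0 := by
  simp [extendMatrix]

theorem stmt10 {n : ℕ} (r : Fin n → Fin n → ℝ) (hr : IsDistMatrix r)
    (a : Fin n → ℝ) (ha : Admissible r a) :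
    (fun (b : Fin (n + 1) → ℝ) (i : Fin n) => b (Fin.castSucc i)) ''
        {b | Admissible (extendMatrix r a) b} = {b | Admissible r b} := by
  ext b
  constructor
  · rintro ⟨c, hc, rfl⟩ i j
    have := hc i.castSucc j.castSucc
    rwa [ext_cc] at this
  · intro hb
    -- choose h
    rcases isEmpty_or_nonempty (Fin n) with hE | hN
    · refine ⟨fun _ => 0, ?_, ?_⟩
      · intro i j
        rcases Fin.eq_castSucc_or_eq_last i with ⟨i', rfl⟩ | rfl
        · exact (hE.false i').elim
        rcases Fin.eq_castSucc_or_eq_last j with ⟨j', rfl⟩ | rfl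
        · exact (hE.false j').elim
        simp [ext_ll]
      · funext i
        exact (hE.false i).elim
    · have hune : (Finset.univ : Finset (Fin n)).Nonempty := Finset.univ_nonempty
      set h : ℝ := Finset.univ.sup' hune (fun i => |a i - b i|) with hh
      have hge : ∀ i, |a i - b i| ≤ h := fun i =>
        Finset.le_sup' (fun i => |a i - b i|) (Finset.mem_univ i)
      have h0 : 0 ≤ h := le_trans (abs_nonneg _) (hge hN.some)
      have hle : ∀ j, h ≤ a j + b j := by
        intro j
        rw [hh]
        apply Finset.sup'_le
        intro i _
        rw [abs_le]
        have t1 : b i - b j ≤ r i j := le_trans (le_abs_self _) (hb i j).1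
        have t2 : r i j ≤ a i + a j := (ha i j).2
        have t3 : a i - a j ≤ r i j := le_trans (le_abs_self _) (ha i j).1
        have t4 : r i j ≤ b i + b j := (hb i j).2
        constructor <;> linarith
      set c : Fin (n+1) → ℝ := fun i => if hi : (i : ℕ) < n then b ⟨i, hi⟩ else h with hcd
      have hcc : ∀ i : Fin n, c i.castSucc = b i := by
        intro i; simp [hcd, i.isLt]
      have hcl : c (Fin.last n) = h := by simp [hcd]
      refine ⟨c, ?_, ?_⟩
      · intro i j
        rcases Fin.eq_castSucc_or_eq_last i with ⟨i', rfl⟩ | rfl <;>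
          rcases Fin.eq_castSucc_or_eq_last j with ⟨j', rfl⟩ | rfl
        · rw [ext_cc, hcc, hcc]; exact hb i' j'
        · rw [ext_cl, hcc, hcl]
          have g1 : a i' - b i' ≤ h := le_trans (le_abs_self _) (hge i')
          have g2 : b i' - a i' ≤ h := le_trans (le_abs_self _) (abs_sub_comm (a i') (b i') ▸ hge i')
          have g3 := hle i'
          constructor
          · rw [abs_le]; constructor <;> linarith
          · linarith
        · rw [ext_lc, hcl, hcc]
          have g1 : a j' - b j' ≤ h := le_trans (le_abs_self _) (hge j')
          have g2 : b j' - a j' ≤ h := le_trans (le_abs_self _) (abs_sub_comm (a j') (b j') ▸ hge j')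
          have g3 := hle j'
          constructor
          · rw [abs_le]; constructor <;> linarith
          · linarith
        · rw [ext_ll, hcl]
          simp [h0]
      · funext i
        simp [hcc]
end

section
/- (Surjectivity of projections, general) For natural numbers n < N and any distance matrix r of order N, the coordinate projection ℝ^N → ℝ^n maps A(r) onto A(p_n(r)), where p_n(r) is the NW-corner of r of order n: for every a ∈ A(p_n(r)) there exist b_{n+1},...,b_N such that (a_1,...,a_n,b_{n+1},...,b_N) ∈ A(r). -/
lemma step_ext {N m : ℕ} (r : Fin N → Fin N → ℝ) (hr : IsDistMatrix r) (h : m < N)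
    (a : Fin m → ℝ)
    (ha : Admissible (fun i j : Fin m => r (Fin.castLE h.le i) (Fin.castLE h.le j)) a) :
    ∃ a' : Fin (m+1) → ℝ,
      Admissible (fun i j : Fin (m+1) => r (Fin.castLE h i) (Fin.castLE h j)) a' ∧
      ∀ i : Fin m, a' i.castSucc = a i := by
  obtain ⟨hdiag, hsymm, hnonneg, htri⟩ := hr
  set k : Fin N := ⟨m, h⟩ with hk
  set e : Fin m → Fin N := fun i => Fin.castLE h.le i with he
  -- choose the new coordinate c
  rcases Nat.eq_zero_or_pos m with hm | hm
  · subst hm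
    refine ⟨fun _ => 0, ?_, fun i => absurd i.2 (by omega)⟩
    intro i j
    have hi : Fin.castLE h i = k := by
      apply Fin.ext; simp [hk]
    have hj : Fin.castLE h j = k := by
      apply Fin.ext; simp [hk]
    simp [hi, hj, hdiag k]
  · have hne : (Finset.univ : Finset (Fin m)).Nonempty := by
      exact Finset.univ_nonempty_iff.mpr (Fin.pos_iff_nonempty.mp hm)
    set c : ℝ := Finset.univ.sup' hne (fun i => |a i - r (e i) k|) with hc
    have hub : ∀ i, |a i - r (e i) k| ≤ c := by
      intro i; rw [hc]; exact Finset.le_sup' (fun i => |a i - r (e i) k|) (Finset.mem_univ i)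
    have hcle : ∀ j, c ≤ a j + r (e j) k := by
      intro j
      apply Finset.sup'_le
      intro i _
      rw [abs_le]
      constructor
      · have h1 : r (e i) k ≤ r (e i) (e j) + r (e j) k := htri _ _ _
        have h2 : r (e i) (e j) ≤ a i + a j := (ha i j).2
        nlinarith
      · have h1 : a i - a j ≤ r (e i) (e j) := (abs_le.mp (ha i j).1).2
        have h2 : r (e i) (e j) ≤ r (e i) k + r k (e j) := htri _ _ _
        have h3 : r k (e j) = r (e j) k := hsymm _ _
        linarith
    have hc0 : 0 ≤ c := le_trans (abs_nonneg _) (hub ⟨0, hm⟩)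
    refine ⟨Fin.snoc a c, ?_, fun i => by simp⟩
    have hcastlast : Fin.castLE h (Fin.last m) = k := by apply Fin.ext; simp [hk]
    have hcastsucc : ∀ i : Fin m, Fin.castLE h i.castSucc = e i := by
      intro i; apply Fin.ext; simp [he]
    intro i j
    induction i using Fin.lastCases with
    | last =>
      induction j using Fin.lastCases with
      | last => simp [hcastlast, hdiag k, hc0]
      | cast j =>
        simp only [Fin.snoc_last, Fin.snoc_castSucc, hcastlast, hcastsucc]
        have h1 := hub j
        have h2 := hcle j
        have h3 : r k (e j) = r (e j) k := hsymm _ _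
        rw [abs_le] at h1 ⊢
        constructor
        · constructor <;> linarith [h1.1, h1.2]
        · linarith [h1.1]
    | cast i =>
      induction j using Fin.lastCases with
      | last =>
        simp only [Fin.snoc_last, Fin.snoc_castSucc, hcastlast, hcastsucc]
        have h1 := hub i
        have h2 := hcle i
        rw [abs_le] at h1 ⊢
        constructor
        · constructor <;> linarith [h1.1, h1.2]
        · linarith [h1.1]
      | cast j =>
        simp only [Fin.snoc_castSucc, hcastsucc]
        exact ha i j

lemma ext_many {N : ℕ} (r : Fin N → Fin N → ℝ) (hr : IsDistMatrix r) :
    ∀ k m (hmk : m + k = N) (a : Fin m → ℝ)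
      (_ : Admissible (fun i j : Fin m =>
        r (Fin.castLE (by omega) i) (Fin.castLE (by omega) j)) a),
      ∃ b : Fin N → ℝ, Admissible r b ∧
        ∀ i : Fin m, b (Fin.castLE (by omega) i) = a i := by
  intro k
  induction k with
  | zero =>
    intro m hmk a ha
    subst hmk
    refine ⟨a, ?_, fun i => congrArg a (Fin.ext rfl)⟩
    intro i j
    have : ∀ i : Fin (m + 0), Fin.castLE (by omega : m ≤ m + 0) i = i := by
      intro i; apply Fin.ext; simp
    simpa [this] using ha i j
  | succ k ih =>
    intro m hmk a ha
    have hm : m < N := by omega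
    obtain ⟨a', ha', hproj⟩ := step_ext r hr hm a ha
    obtain ⟨b, hb, hbproj⟩ := ih (m+1) (by omega) a' ha'
    refine ⟨b, hb, fun i => ?_⟩
    have : Fin.castLE (by omega : m ≤ N) i
        = Fin.castLE (by omega : m + 1 ≤ N) i.castSucc := by
      apply Fin.ext; simp
    rw [this, hbproj i.castSucc, hproj i]

theorem stmt11 {n N : ℕ} (hnN : n < N) (r : Fin N → Fin N → ℝ)
    (hr : IsDistMatrix r)
    (a : Fin n → ℝ)
    (ha : Admissible (fun i j : Fin n => r (Fin.castLE hnN.le i) (Fin.castLE hnN.le j)) a) :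
    ∃ b : Fin N → ℝ, Admissible r b ∧ ∀ i : Fin n, b (Fin.castLE hnN.le i) = a i := by
  exact ext_many r hr (N - n) n (by omega) a ha
end

section
/- Every universal distance matrix is weakly universal: if r is an infinite distance matrix such that for every n, the set of columns {(r_{1,j},...,r_{n,j}) : j > n} is dense in A(p_n(r)), then for every n, every distance matrix q of order n, and every ε > 0 there exist indices i_1 < ... < i_n with max_{k,s} |r_{i_k,i_s} - q_{k,s}| < ε. -/
/-- An infinite distance matrix on the natural numbers. -/
def IsInfDistMatrix (r : ℕ → ℕ → ℝ) : Prop :=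
  (∀ i, r i i = 0) ∧ (∀ i j, r i j = r j i) ∧ (∀ i j, 0 ≤ r i j) ∧
  (∀ i j k, r i j ≤ r i k + r k j)

/-- The NW-corner of order `n` of an infinite matrix. -/
def corner (r : ℕ → ℕ → ℝ) (n : ℕ) : Fin n → Fin n → ℝ := fun i j => r i j

/-- `r` is a universal distance matrix: for every `n`, the columns
`(r_{1,m},…,r_{n,m})`, `m > n`, are dense in the set of admissible vectors of
the NW-corner of order `n`. -/
def IsUniversal (r : ℕ → ℕ → ℝ) : Prop :=
  ∀ (n : ℕ) (a : Fin n → ℝ), Admissible (corner r n) a →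
    ∀ ε > (0 : ℝ), ∃ m : ℕ, n ≤ m ∧ ∀ i : Fin n, |r i m - a i| < ε

theorem stmt15 (r : ℕ → ℕ → ℝ) (hr : IsInfDistMatrix r) (hu : IsUniversal r) :
    ∀ (n : ℕ) (q : Fin n → Fin n → ℝ), IsDistMatrix q →
      ∀ ε > (0 : ℝ), ∃ φ : Fin n → ℕ, StrictMono φ ∧
        ∀ k s : Fin n, |r (φ k) (φ s) - q k s| < ε := by
  intro n q hq ε hε
  obtain ⟨hq0, hqsymm, hqnn, hqtri⟩ := hq
  obtain ⟨hr0, hrsymm, hrnn, hrtri⟩ := hr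
  set δ : ℝ := ε / 3 ^ n with hδdef
  have hδ : 0 < δ := by positivity
  have key : ∀ k (hk : k ≤ n), ∃ φ : Fin k → ℕ, StrictMono φ ∧
      ∀ a b : Fin k,
        |r (φ a) (φ b) - q (Fin.castLE hk a) (Fin.castLE hk b)| < 3 ^ k * δ := by
    intro k
    induction k with
    | zero =>
      intro hk
      exact ⟨Fin.elim0, fun a => a.elim0, fun a => a.elim0⟩
    | succ k ih =>
      intro hk1
      have hk : k ≤ n := Nat.le_of_succ_le hk1
      obtain ⟨φ, hφmono, hφerr⟩ := ih hk
      have hpow : (0:ℝ) < 3 ^ k * δ := by positivity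
      rcases Nat.eq_zero_or_pos k with hk0 | hkpos
      · subst hk0
        refine ⟨fun _ => 0, ?_, ?_⟩
        · intro a b hab
          rw [Fin.lt_def] at hab
          omega
        · intro a b
          have hab : Fin.castLE hk1 a = Fin.castLE hk1 b := by
            apply Fin.ext
            show a.val = b.val
            omega
          rw [hab, hq0, hr0]
          simpa using hpow
      -- general step, k ≥ 1
      have hknz : Nonempty (Fin k) := ⟨⟨0, hkpos⟩⟩
      set klast : Fin k := ⟨k - 1, by omega⟩ with hklast
      set N : ℕ := φ klast + 1 with hN
      have hφlt : ∀ a : Fin k, φ a < N := by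
        intro a
        have : φ a ≤ φ klast := by
          apply hφmono.monotone
          rw [Fin.le_def]
          have := a.isLt
          simp only [hklast]
          omega
        omega
      set kn : Fin n := ⟨k, hk1⟩ with hkn
      set t : Fin k → ℝ := fun j => q (Fin.castLE hk j) kn + 3 ^ k * δ with ht
      set f : Fin N → ℝ := fun x =>
        Finset.univ.inf' Finset.univ_nonempty (fun j : Fin k => t j + r x (φ j)) with hf
      have hfle : ∀ (x : Fin N) (j : Fin k), f x ≤ t j + r x (φ j) := by
        intro x j
        exact Finset.inf'_le _ (Finset.mem_univ j)
      have hfex : ∀ x : Fin N, ∃ j : Fin k, f x = t j + r x (φ j) := by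
        intro x
        obtain ⟨j, _, hj⟩ := Finset.exists_mem_eq_inf' Finset.univ_nonempty
          (fun j : Fin k => t j + r x (φ j))
        exact ⟨j, hj⟩
      have hrq_ub : ∀ a b : Fin k,
          r (φ a) (φ b) ≤ q (Fin.castLE hk a) (Fin.castLE hk b) + 3 ^ k * δ := by
        intro a b
        have := hφerr a b
        have := abs_lt.1 this
        linarith [this.2]
      have hrq_lb : ∀ a b : Fin k,
          q (Fin.castLE hk a) (Fin.castLE hk b) - 3 ^ k * δ ≤ r (φ a) (φ b) := by
        intro a b
        have := abs_lt.1 (hφerr a b)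
        linarith [this.1]
      have htt : ∀ a b : Fin k, r (φ a) (φ b) ≤ t a + t b := by
        intro a b
        have h1 := hrq_ub a b
        have h2 := hqtri (Fin.castLE hk a) (Fin.castLE hk b) kn
        have h3 := hqsymm kn (Fin.castLE hk b)
        simp only [ht]
        linarith
      have hadm : Admissible (corner r N) f := by
        intro i j
        constructor
        · rw [abs_sub_le_iff]
          constructor
          · obtain ⟨a, ha⟩ := hfex j
            have h1 := hfle i a
            have h2 := hrtri (i : ℕ) (φ a) (j : ℕ)
            have h3 := hrsymm (j : ℕ) (φ a)
            show f i - f j ≤ r (i : ℕ) (j : ℕ)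
            rw [ha]
            linarith
          · obtain ⟨a, ha⟩ := hfex i
            have h1 := hfle j a
            have h2 := hrtri (j : ℕ) (φ a) (i : ℕ)
            have h3 := hrsymm (i : ℕ) (φ a)
            have h4 := hrsymm (i : ℕ) (j : ℕ)
            show f j - f i ≤ r (i : ℕ) (j : ℕ)
            rw [ha]
            linarith
        · obtain ⟨a, ha⟩ := hfex i
          obtain ⟨b, hb⟩ := hfex j
          have h1 := hrtri (i : ℕ) (φ b) (φ a)
          have h2 := hrtri (φ a) (j : ℕ) (φ b)
          have h3 := htt a b
          have h4 := hrsymm (φ b) (j : ℕ)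
          show r (i : ℕ) (j : ℕ) ≤ f i + f j
          rw [ha, hb]
          have h5 := hrtri (i : ℕ) (j : ℕ) (φ a)
          have h6 := hrtri (φ a) (j : ℕ) (φ b)
          have h7 := hrsymm (φ a) (i : ℕ)
          linarith
      have hfφ : ∀ a : Fin k,
          |f ⟨φ a, hφlt a⟩ - q (Fin.castLE hk a) kn| ≤ 3 ^ k * δ := by
        intro a
        rw [abs_le]
        constructor
        · obtain ⟨b, hb⟩ := hfex ⟨φ a, hφlt a⟩
          have h1 := hrq_lb a b
          have h2 := hqtri (Fin.castLE hk a) kn (Fin.castLE hk b)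
          have h3 := hqsymm (Fin.castLE hk b) kn
          have : f ⟨φ a, hφlt a⟩ = t b + r (φ a) (φ b) := hb
          simp only [ht] at this
          linarith
        · have h1 := hfle ⟨φ a, hφlt a⟩ a
          have h2 : r (φ a) (φ a) = 0 := hr0 _
          have : f ⟨φ a, hφlt a⟩ ≤ t a + r (φ a) (φ a) := h1
          simp only [ht] at this
          linarith
      obtain ⟨m, hmN, hm⟩ := hu N f hadm (3 ^ k * δ) hpow
      have hnew : ∀ a : Fin k,
          |r (φ a) m - q (Fin.castLE hk a) kn| < 2 * (3 ^ k * δ) := by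
        intro a
        have h1 := hm ⟨φ a, hφlt a⟩
        have h2 := hfφ a
        calc |r (φ a) m - q (Fin.castLE hk a) kn|
            ≤ |r (φ a) m - f ⟨φ a, hφlt a⟩| + |f ⟨φ a, hφlt a⟩ - q (Fin.castLE hk a) kn| := by
              have := abs_sub_abs_le_abs_sub (r (φ a) m) (f ⟨φ a, hφlt a⟩)
              exact abs_sub_le _ _ _
          _ < 3 ^ k * δ + 3 ^ k * δ := by
              apply add_lt_add_of_lt_of_le _ h2
              exact h1
          _ = 2 * (3 ^ k * δ) := by ring
      set φ' : Fin (k + 1) → ℕ := fun a => if h : a.val < k then φ ⟨a.val, h⟩ else m with hφ'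
      have hφ'mono : StrictMono φ' := by
        intro a b hab
        rw [Fin.lt_def] at hab
        simp only [hφ']
        by_cases hb : b.val < k
        · have ha : a.val < k := by omega
          rw [dif_pos ha, dif_pos hb]
          apply hφmono
          rw [Fin.lt_def]
          exact hab
        · have ha : a.val < k := by omega
          rw [dif_pos ha, dif_neg hb]
          have := hφlt ⟨a.val, ha⟩
          omega
      refine ⟨φ', hφ'mono, ?_⟩
      have hcast : ∀ (c : Fin (k+1)) (hc : c.val < k),
          Fin.castLE hk1 c = Fin.castLE hk ⟨c.val, hc⟩ := by
        intro c hc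
        apply Fin.ext
        rfl
      have hcastk : ∀ (c : Fin (k+1)) (hc : ¬ c.val < k), Fin.castLE hk1 c = kn := by
        intro c hc
        apply Fin.ext
        have := c.isLt
        simp [hkn, Fin.castLE]
        omega
      have hmono3 : 2 * (3 ^ k * δ) < 3 ^ (k+1) * δ := by
        have : (3:ℝ) ^ (k+1) = 3 * 3 ^ k := by ring
        rw [this]
        nlinarith [pow_pos (by norm_num : (0:ℝ) < 3) k]
      have hmono1 : 3 ^ k * δ < 3 ^ (k+1) * δ := by
        have : (3:ℝ) ^ (k+1) = 3 * 3 ^ k := by ring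
        rw [this]
        nlinarith [pow_pos (by norm_num : (0:ℝ) < 3) k]
      intro a b
      by_cases ha : a.val < k <;> by_cases hb : b.val < k
      · simp only [hφ', dif_pos ha, dif_pos hb]
        rw [hcast a ha, hcast b hb]
        exact lt_trans (hφerr _ _) hmono1
      · simp only [hφ', dif_pos ha, dif_neg hb]
        rw [hcast a ha, hcastk b hb]
        exact lt_trans (hnew ⟨a.val, ha⟩) hmono3
      · simp only [hφ', dif_neg ha, dif_pos hb]
        rw [hcastk a ha, hcast b hb]
        rw [hrsymm, hqsymm]
        exact lt_trans (hnew ⟨b.val, hb⟩) hmono3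
      · simp only [hφ', dif_neg ha, dif_neg hb]
        rw [hcastk a ha, hcastk b hb, hr0, hq0]
        simpa using lt_trans hpow hmono1
  obtain ⟨φ, h1, h2⟩ := key n le_rfl
  have h3 : (3:ℝ) ^ n * δ = ε := by
    rw [hδdef]
    field_simp
  refine ⟨φ, h1, fun a b => ?_⟩
  have := h2 a b
  rw [h3] at this
  exact this
end

section
/- There exists a universal distance matrix: an infinite proper distance matrix r such that for every n ∈ ℕ, every ε > 0, and every admissible vector a ∈ A(p_n(r)), there exists m > n with max_{1≤i≤n} |r_{i,m} - a_i| < ε. -/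
noncomputable section UConstr
namespace UConstr

open Finset

/-- candidate list decoded at stage `m`. -/
def cand (m : ℕ) : Option (List ℚ) := Encodable.decode (Nat.unpair m).2

/-- a decoded list is good if it is a positive admissible vector over the
current corner. -/
def Good (q : ℕ → ℕ → ℝ) (m : ℕ) (l : List ℚ) : Prop :=
  0 < l.length ∧ l.length ≤ m ∧
  (∀ i : Fin l.length, (0:ℝ) < (l.get i : ℝ)) ∧
  (∀ i j : Fin l.length,
    |(l.get i : ℝ) - (l.get j : ℝ)| ≤ q i j ∧ q i j ≤ (l.get i : ℝ) + (l.get j : ℝ))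

open Classical in
/-- distances from the new point `m` to the old points. -/
def newcol (q : ℕ → ℕ → ℝ) (m : ℕ) : ℕ → ℝ := fun j =>
  match cand m with
  | some l =>
    if h : Good q m l then
      (Finset.univ : Finset (Fin l.length)).inf' ⟨⟨0, h.1⟩, Finset.mem_univ _⟩
        (fun i => (l.get i : ℝ) + q j i)
    else q j 0 + 1
  | none => q j 0 + 1

/-- the matrix after `m` steps (meaningful on indices `< m`). -/
def R : ℕ → ℕ → ℕ → ℝ
  | 0 => fun _ _ => 0
  | (m+1) => fun i j =>
      if i = m then (if j = m then 0 else newcol (R m) m j)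
      else if j = m then newcol (R m) m i
      else R m i j

lemma R_succ_mm (m : ℕ) : R (m+1) m m = 0 := by simp [R]

lemma R_succ_mj {m j : ℕ} (hj : j < m) : R (m+1) m j = newcol (R m) m j := by
  simp [R, Nat.ne_of_lt hj]

lemma R_succ_im {m i : ℕ} (hi : i < m) : R (m+1) i m = newcol (R m) m i := by
  simp [R, Nat.ne_of_lt hi]

lemma R_succ_lt {m i j : ℕ} (hi : i < m) (hj : j < m) : R (m+1) i j = R m i j := by
  simp [R, Nat.ne_of_lt hi, Nat.ne_of_lt hj]

lemma R_agree {m m' : ℕ} (h : m ≤ m') {i j : ℕ} (hi : i < m) (hj : j < m) :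
    R m' i j = R m i j := by
  induction m', h using Nat.le_induction with
  | base => rfl
  | succ m' hm ih =>
      rw [R_succ_lt (lt_of_lt_of_le hi hm) (lt_of_lt_of_le hj hm), ih]

def Inv (m : ℕ) : Prop :=
  (∀ i, i < m → R m i i = 0) ∧
  (∀ i j, i < m → j < m → R m i j = R m j i) ∧
  (∀ i j, i < m → j < m → i ≠ j → 0 < R m i j) ∧
  (∀ i j k, i < m → j < m → k < m → R m i j ≤ R m i k + R m k j)

lemma Inv.nonneg {m : ℕ} (h : Inv m) {i j : ℕ} (hi : i < m) (hj : j < m) :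
    0 ≤ R m i j := by
  rcases eq_or_ne i j with rfl | hne
  · exact le_of_eq (h.1 i hi).symm
  · exact le_of_lt (h.2.2.1 i j hi hj hne)

lemma newcol_spec {m : ℕ} (h : Inv m) :
    (∀ j, j < m → 0 < newcol (R m) m j) ∧
    (∀ x y, x < m → y < m → newcol (R m) m x ≤ newcol (R m) m y + R m x y) ∧
    (∀ x y, x < m → y < m → R m x y ≤ newcol (R m) m x + newcol (R m) m y) := by
  have key : ∀ P : (ℕ → ℝ) → Prop,
      (∀ l : List ℚ, cand m = some l → ∀ hg : Good (R m) m l,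
        P (fun j => (Finset.univ : Finset (Fin l.length)).inf'
            ⟨⟨0, hg.1⟩, Finset.mem_univ _⟩ (fun i => (l.get i : ℝ) + R m j i))) →
      P (fun j => R m j 0 + 1) → P (newcol (R m) m) := by
    intro P hgood hdef
    unfold newcol
    rcases hc : cand m with _ | l
    · simpa [hc] using hdef
    · by_cases hg : Good (R m) m l
      · simpa [hc, hg] using hgood l hc hg
      · simpa [hc, hg] using hdef
  set f := newcol (R m) m with hf
  apply key (fun f => (∀ j, j < m → 0 < f j) ∧
    (∀ x y, x < m → y < m → f x ≤ f y + R m x y) ∧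
    (∀ x y, x < m → y < m → R m x y ≤ f x + f y))
  · intro l _ hg
    obtain ⟨hlen0, hlen, hbpos, hadm⟩ := hg
    have hne : (Finset.univ : Finset (Fin l.length)).Nonempty :=
      ⟨⟨0, hlen0⟩, Finset.mem_univ _⟩
    have hidx : ∀ i : Fin l.length, (i : ℕ) < m := fun i => lt_of_lt_of_le i.2 hlen
    refine ⟨?_, ?_, ?_⟩
    · intro j hj
      obtain ⟨i0, -, hi0⟩ := Finset.exists_mem_eq_inf' hne
        (fun i : Fin l.length => (l.get i : ℝ) + R m j i)
      simp only [hi0]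
      exact add_pos_of_pos_of_nonneg (hbpos i0) (h.nonneg hj (hidx i0))
    · intro x y hx hy
      obtain ⟨i0, -, hi0⟩ := Finset.exists_mem_eq_inf' hne
        (fun i : Fin l.length => (l.get i : ℝ) + R m y i)
      simp only [hi0]
      have h2 : R m x i0 ≤ R m x y + R m y i0 := h.2.2.2 x i0 y hx (hidx i0) hy
      refine le_trans (Finset.inf'_le _ (Finset.mem_univ i0)) ?_
      linarith
    · intro x y hx hy
      obtain ⟨i0, -, hi0⟩ := Finset.exists_mem_eq_inf' hne
        (fun i : Fin l.length => (l.get i : ℝ) + R m x i)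
      obtain ⟨j0, -, hj0⟩ := Finset.exists_mem_eq_inf' hne
        (fun i : Fin l.length => (l.get i : ℝ) + R m y i)
      simp only [hi0, hj0]
      have hadm' : R m i0 j0 ≤ (l.get i0 : ℝ) + (l.get j0 : ℝ) := (hadm i0 j0).2
      have h1 : R m x y ≤ R m x i0 + R m i0 y := h.2.2.2 x y i0 hx hy (hidx i0)
      have h2 : R m i0 y ≤ R m i0 j0 + R m j0 y :=
        h.2.2.2 i0 y j0 (hidx i0) hy (hidx j0)
      have h3 : R m j0 y = R m y j0 := h.2.1 j0 y (hidx j0) hy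
      linarith
  · have h0 : ∀ j, j < m → (0:ℕ) < m := fun j hj => lt_of_le_of_lt (Nat.zero_le j) hj
    refine ⟨?_, ?_, ?_⟩
    · intro j hj
      have := h.nonneg hj (h0 j hj)
      show 0 < R m j 0 + 1
      linarith
    · intro x y hx hy
      have := h.2.2.2 x 0 y hx (h0 x hx) hy
      show R m x 0 + 1 ≤ (R m y 0 + 1) + R m x y
      linarith
    · intro x y hx hy
      have h1 : R m x y ≤ R m x 0 + R m 0 y := h.2.2.2 x y 0 hx hy (h0 x hx)
      have h2 : R m 0 y = R m y 0 := h.2.1 0 y (h0 x hx) hy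
      show R m x y ≤ (R m x 0 + 1) + (R m y 0 + 1)
      linarith

lemma inv_all : ∀ m, Inv m := by
  intro m
  induction m with
  | zero =>
      exact ⟨fun i hi => absurd hi (Nat.not_lt_zero i),
        fun i j hi _ => absurd hi (Nat.not_lt_zero i),
        fun i j hi _ _ => absurd hi (Nat.not_lt_zero i),
        fun i j k hi _ _ => absurd hi (Nat.not_lt_zero i)⟩
  | succ m ih =>
      obtain ⟨fpos, flip, fsum⟩ := newcol_spec ih
      have fnn : ∀ j, j < m → 0 ≤ newcol (R m) m j := fun j hj => (fpos j hj).le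
      refine ⟨?_, ?_, ?_, ?_⟩
      · intro i hi
        rcases Nat.lt_succ_iff_lt_or_eq.mp hi with hi' | hi'
        · rw [R_succ_lt hi' hi']; exact ih.1 i hi'
        · rw [hi']; exact R_succ_mm m
      · intro i j hi hj
        rcases Nat.lt_succ_iff_lt_or_eq.mp hi with hi' | hi' <;>
          rcases Nat.lt_succ_iff_lt_or_eq.mp hj with hj' | hj'
        · rw [R_succ_lt hi' hj', R_succ_lt hj' hi']; exact ih.2.1 i j hi' hj'
        · rw [hj', R_succ_im hi', R_succ_mj hi']
        · rw [hi', R_succ_mj hj', R_succ_im hj']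
        · rw [hi', hj']
      · intro i j hi hj hne
        rcases Nat.lt_succ_iff_lt_or_eq.mp hi with hi' | hi' <;>
          rcases Nat.lt_succ_iff_lt_or_eq.mp hj with hj' | hj'
        · rw [R_succ_lt hi' hj']; exact ih.2.2.1 i j hi' hj' hne
        · rw [hj', R_succ_im hi']; exact fpos i hi'
        · rw [hi', R_succ_mj hj']; exact fpos j hj'
        · exact absurd (hi'.trans hj'.symm) hne
      · intro i j k hi hj hk
        rcases Nat.lt_succ_iff_lt_or_eq.mp hi with hi' | hi' <;>
          rcases Nat.lt_succ_iff_lt_or_eq.mp hj with hj' | hj' <;>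
          rcases Nat.lt_succ_iff_lt_or_eq.mp hk with hk' | hk'
        · rw [R_succ_lt hi' hj', R_succ_lt hi' hk', R_succ_lt hk' hj']
          exact ih.2.2.2 i j k hi' hj' hk'
        · rw [hk', R_succ_lt hi' hj', R_succ_im hi', R_succ_mj hj']
          exact fsum i j hi' hj'
        · rw [hj', R_succ_im hi', R_succ_lt hi' hk', R_succ_im hk']
          have h1 := flip i k hi' hk'
          have h2 := ih.2.1 i k hi' hk'
          linarith
        · rw [hj', hk', R_succ_im hi', R_succ_mm]
          linarith [flip i i hi' hi', (ih.1 i hi')]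
        · rw [hi', R_succ_mj hj', R_succ_mj hk', R_succ_lt hk' hj']
          have := flip j k hj' hk'
          have h2 := ih.2.1 j k hj' hk'
          linarith
        · rw [hi', hk', R_succ_mj hj', R_succ_mm]
          linarith [fpos j hj']
        · rw [hi', hj', R_succ_mm, R_succ_mj hk', R_succ_im hk']
          linarith [fpos k hk']
        · rw [hi', hj', hk', R_succ_mm]
          linarith
  
def rr : ℕ → ℕ → ℝ := fun i j => R (max i j + 1) i j

lemma rr_eq {N i j : ℕ} (hi : i < N) (hj : j < N) : rr i j = R N i j := by
  have h : max i j + 1 ≤ N := Nat.succ_le_of_lt (max_lt hi hj)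
  exact (R_agree h (Nat.lt_succ_of_le (le_max_left i j))
    (Nat.lt_succ_of_le (le_max_right i j))).symm

lemma rr_dist : IsInfDistMatrix rr := by
  refine ⟨?_, ?_, ?_, ?_⟩
  · intro i
    rw [rr_eq (Nat.lt_succ_self i) (Nat.lt_succ_self i)]
    exact (inv_all (i+1)).1 i (Nat.lt_succ_self i)
  · intro i j
    set N := max i j + 1 with hN
    have hi : i < N := Nat.lt_succ_of_le (le_max_left i j)
    have hj : j < N := Nat.lt_succ_of_le (le_max_right i j)
    rw [rr_eq hi hj, rr_eq hj hi]
    exact (inv_all N).2.1 i j hi hj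
  · intro i j
    set N := max i j + 1 with hN
    have hi : i < N := Nat.lt_succ_of_le (le_max_left i j)
    have hj : j < N := Nat.lt_succ_of_le (le_max_right i j)
    rw [rr_eq hi hj]
    exact (inv_all N).nonneg hi hj
  · intro i j k
    set N := max i (max j k) + 1 with hN
    have hi : i < N := Nat.lt_succ_of_le (le_max_left _ _)
    have hj : j < N := Nat.lt_succ_of_le (le_trans (le_max_left j k) (le_max_right _ _))
    have hk : k < N := Nat.lt_succ_of_le (le_trans (le_max_right j k) (le_max_right _ _))
    rw [rr_eq hi hj, rr_eq hi hk, rr_eq hk hj]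
    exact (inv_all N).2.2.2 i j k hi hj hk

lemma rr_proper : ∀ i j, i ≠ j → 0 < rr i j := by
  intro i j hne
  have hi : i < max i j + 1 := Nat.lt_succ_of_le (le_max_left i j)
  have hj : j < max i j + 1 := Nat.lt_succ_of_le (le_max_right i j)
  rw [rr_eq hi hj]
  exact (inv_all _).2.2.1 i j hi hj hne

lemma ratApprox {n : ℕ} (q : Fin n → Fin n → ℝ)
    (hdiag : ∀ i, q i i = 0) (hnn : ∀ i j, 0 ≤ q i j)
    (hposq : ∀ i j, i ≠ j → 0 < q i j)
    (a : Fin n → ℝ) (ha : ∀ i j, |a i - a j| ≤ q i j ∧ q i j ≤ a i + a j)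
    {ε : ℝ} (hε : 0 < ε) :
    ∃ b : Fin n → ℚ, (∀ i, (0:ℝ) < (b i : ℝ)) ∧
      (∀ i j, |(b i : ℝ) - (b j : ℝ)| ≤ q i j ∧ q i j ≤ (b i : ℝ) + (b j : ℝ)) ∧
      (∀ i, |(b i : ℝ) - a i| < ε) := by
  have anneg : ∀ i, 0 ≤ a i := by
    intro i
    have := (ha i i).2
    rw [hdiag i] at this
    linarith
  set M : ℝ := 1 + ∑ i, ∑ j, q i j with hMdef
  have hsumnn : (0:ℝ) ≤ ∑ i, ∑ j, q i j :=
    Finset.sum_nonneg fun i _ => Finset.sum_nonneg fun j _ => hnn i j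
  have hM1 : (1:ℝ) ≤ M := by simp [hMdef]; linarith
  have hM0 : (0:ℝ) < M := by linarith
  have hMq : ∀ i j, q i j ≤ M := by
    intro i j
    have h1 : q i j ≤ ∑ j', q i j' :=
      Finset.single_le_sum (fun j' _ => hnn i j') (Finset.mem_univ j)
    have h2 : (∑ j', q i j') ≤ ∑ i', ∑ j', q i' j' :=
      Finset.single_le_sum (fun i' _ => Finset.sum_nonneg fun j' _ => hnn i' j')
        (Finset.mem_univ i)
    simp only [hMdef]
    linarith
  set F : Finset ℝ := insert M ((Finset.univ.filter
      (fun p : Fin n × Fin n => p.1 ≠ p.2)).image (fun p => q p.1 p.2)) with hFdef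
  have hFne : F.Nonempty := ⟨M, Finset.mem_insert_self _ _⟩
  set ρ : ℝ := F.min' hFne with hρdef
  have hρM : ρ ≤ M := Finset.min'_le _ _ (Finset.mem_insert_self _ _)
  have hρq : ∀ i j, i ≠ j → ρ ≤ q i j := by
    intro i j hne
    refine Finset.min'_le _ _ ?_
    refine Finset.mem_insert_of_mem (Finset.mem_image.mpr ⟨(i, j), ?_, rfl⟩)
    exact Finset.mem_filter.mpr ⟨Finset.mem_univ _, hne⟩
  have hρ0 : 0 < ρ := by
    have hmem : ρ ∈ F := Finset.min'_mem F hFne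
    rcases Finset.mem_insert.mp hmem with h | h
    · rw [h]; exact hM0
    · obtain ⟨p, hp, hpq⟩ := Finset.mem_image.mp h
      have hne := (Finset.mem_filter.mp hp).2
      rw [← hpq]; exact hposq p.1 p.2 hne
  set Amax : ℝ := ∑ i, a i with hAdef
  have haA : ∀ i, a i ≤ Amax :=
    fun i => Finset.single_le_sum (fun i' _ => anneg i') (Finset.mem_univ i)
  have hA0 : 0 ≤ Amax := Finset.sum_nonneg fun i _ => anneg i
  set C : ℝ := 2 * M + Amax with hCdef
  have hC0 : 0 < C := by simp only [hCdef]; linarith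
  set θ : ℝ := min 1 (ε / (2 * C)) with hθdef
  have hθ0 : 0 < θ := lt_min one_pos (div_pos hε (by linarith))
  have hθ1 : θ ≤ 1 := min_le_left _ _
  have hθC : θ * C ≤ ε / 2 := by
    have h1 : θ ≤ ε / (2 * C) := min_le_right _ _
    have h2 : θ * C ≤ (ε / (2 * C)) * C := mul_le_mul_of_nonneg_right h1 hC0.le
    have h3 : (ε / (2 * C)) * C = ε / 2 := by field_simp
    linarith
  have hbtwn : ∀ i : Fin n, ((1 - θ) * a i + θ * M) <
      ((1 - θ) * a i + θ * M + θ * ρ / 2) := by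
    intro i
    have := mul_pos hθ0 hρ0
    linarith
  choose b hb1 hb2 using fun i => exists_rat_btwn (hbtwn i)
  clear_value θ C Amax ρ F M
  have hbpos : ∀ i, (0:ℝ) < (b i : ℝ) := by
    intro i
    have h1 : 0 ≤ (1 - θ) * a i := mul_nonneg (by linarith) (anneg i)
    have h2 : 0 < θ * M := mul_pos hθ0 hM0
    linarith [hb1 i]
  refine ⟨b, hbpos, ?_, ?_⟩
  · intro i j
    rcases eq_or_ne i j with rfl | hne
    · constructor
      · rw [sub_self, abs_zero, hdiag i]
      · rw [hdiag i]
        linarith [hbpos i]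
    · have hρij := hρq i j hne
      have eθρ : θ * ρ ≤ θ * q i j := mul_le_mul_of_nonneg_left hρij hθ0.le
      have hθρ : 0 < θ * ρ := mul_pos hθ0 hρ0
      obtain ⟨h1, h2⟩ := abs_sub_le_iff.mp (ha i j).1
      constructor
      · rw [abs_sub_le_iff]
        have e1 : (1 - θ) * (a i - a j) ≤ (1 - θ) * q i j :=
          mul_le_mul_of_nonneg_left h1 (by linarith)
        have e2 : (1 - θ) * (a j - a i) ≤ (1 - θ) * q i j :=
          mul_le_mul_of_nonneg_left h2 (by linarith)
        constructor
        · linarith [hb2 i, hb1 j]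
        · linarith [hb2 j, hb1 i]
      · have e3 : (1 - θ) * q i j ≤ (1 - θ) * (a i + a j) :=
          mul_le_mul_of_nonneg_left (ha i j).2 (by linarith)
        have eM : θ * q i j ≤ θ * M := mul_le_mul_of_nonneg_left (hMq i j) hθ0.le
        have hθM : 0 < θ * M := mul_pos hθ0 hM0
        linarith [hb1 i, hb1 j]
  · intro i
    rw [abs_sub_lt_iff]
    have e4 : 0 ≤ θ * a i := mul_nonneg hθ0.le (anneg i)
    have e5 : θ * a i ≤ θ * Amax := mul_le_mul_of_nonneg_left (haA i) hθ0.le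
    have e6 : θ * ρ ≤ θ * M := mul_le_mul_of_nonneg_left hρM hθ0.le
    have e7 : 0 ≤ θ * Amax := mul_nonneg hθ0.le hA0
    have hθM : 0 < θ * M := mul_pos hθ0 hM0
    have hCexp : θ * C = 2 * (θ * M) + θ * Amax := by rw [hCdef]; ring
    constructor
    · linarith [hb2 i]
    · linarith [hb1 i]

lemma rr_univ : IsUniversal rr := by
  intro n a ha ε hε
  rcases Nat.eq_zero_or_pos n with rfl | hn
  · exact ⟨0, le_refl 0, fun i => i.elim0⟩
  have hdiag : ∀ i : Fin n, corner rr n i i = 0 := fun i => rr_dist.1 i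
  have hnn : ∀ i j : Fin n, 0 ≤ corner rr n i j := fun i j => rr_dist.2.2.1 i j
  have hposq : ∀ i j : Fin n, i ≠ j → 0 < corner rr n i j := fun i j hne =>
    rr_proper i j (fun h => hne (Fin.ext h))
  obtain ⟨b, hbpos, hbadm, hbclose⟩ :=
    ratApprox (corner rr n) hdiag hnn hposq a ha hε
  set l : List ℚ := List.ofFn b with hldef
  have hlen : l.length = n := List.length_ofFn (f := b)
  set m := Nat.pair n (Encodable.encode l) with hmdef
  have hnm : n ≤ m := Nat.left_le_pair n _
  have hcand : cand m = some l := by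
    rw [hmdef]
    simp only [cand, Nat.unpair_pair]
    exact Encodable.encodek l
  have hR : ∀ i j : ℕ, i < n → j < n → R m i j = rr i j := fun i j hi hj =>
    (rr_eq (lt_of_lt_of_le hi hnm) (lt_of_lt_of_le hj hnm)).symm
  have hget : ∀ i : Fin l.length, l.get i = b (Fin.cast hlen i) :=
    fun i => List.get_ofFn b i
  have hgood : Good (R m) m l := by
    refine ⟨by rw [hlen]; exact hn, by rw [hlen]; exact hnm, ?_, ?_⟩
    · intro i
      rw [hget i]
      exact hbpos _
    · intro i j
      have hi : (i : ℕ) < n := by rw [← hlen]; exact i.2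
      have hj : (j : ℕ) < n := by rw [← hlen]; exact j.2
      rw [hget i, hget j, hR i j hi hj]
      exact hbadm (Fin.cast hlen i) (Fin.cast hlen j)
  refine ⟨m, hnm, fun i => ?_⟩
  have hin : (i : ℕ) < n := i.2
  have him : (i : ℕ) < m := lt_of_lt_of_le hin hnm
  have hval : rr i m = newcol (R m) m i := by
    rw [rr_eq (Nat.lt_succ_of_lt him) (Nat.lt_succ_self m), R_succ_im him]
  have hi' : (i : ℕ) < l.length := by rw [hlen]; exact hin
  have hRii : R m i i = 0 := by
    rw [hR i i hin hin]
    exact rr_dist.1 i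
  have hcol : newcol (R m) m i = (l.get ⟨i, hi'⟩ : ℝ) := by
    unfold newcol
    simp only [hcand]
    rw [dif_pos hgood]
    apply le_antisymm
    · have h1 := Finset.inf'_le
        (fun t : Fin l.length => (l.get t : ℝ) + R m (i : ℕ) (t : ℕ))
        (Finset.mem_univ (⟨(i : ℕ), hi'⟩ : Fin l.length))
      simp only at h1
      rw [hRii] at h1
      calc _ ≤ (l.get ⟨(i : ℕ), hi'⟩ : ℝ) + 0 := h1
        _ = _ := by ring
    · refine Finset.le_inf' _ _ fun t _ => ?_
      have h2 := (hgood.2.2.2 ⟨(i : ℕ), hi'⟩ t).1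
      have h3 := (abs_sub_le_iff.mp h2).1
      simp only at h3 ⊢
      linarith
  have hcast : Fin.cast hlen (⟨(i : ℕ), hi'⟩ : Fin l.length) = i := Fin.ext rfl
  rw [hval, hcol, hget ⟨(i : ℕ), hi'⟩, hcast]
  exact hbclose i

end UConstr
end UConstr


theorem stmt16 :
    ∃ r : ℕ → ℕ → ℝ, IsInfDistMatrix r ∧ (∀ i j, i ≠ j → 0 < r i j) ∧
      IsUniversal r := by
  exact ⟨UConstr.rr, UConstr.rr_dist, UConstr.rr_proper, UConstr.rr_univ⟩
end

section
/- The set of universal distance matrices is a G_δ set in the cone of infinite distance matrices with the product (weak) topology: it can be written as a countable intersection of open sets, namely ⋂_{k} ⋂_{n} ⋂_{a ∈ A(p_n(r)) ∩ ℚ^n} ⋃_{m > n} {r : max_{i≤n} |r_{i,m} - a_i| < 1/k}. -/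
/-- McShane 1-Lipschitz regularization. -/
noncomputable def mcsh {n : ℕ} (ρ : Fin n → Fin n → ℝ) (b : Fin n → ℝ) (i : Fin n) : ℝ :=
  Finset.univ.inf' ⟨i, Finset.mem_univ i⟩ (fun l => b l + ρ i l)

/-- Katětov retraction. -/
noncomputable def kat {n : ℕ} (ρ : Fin n → Fin n → ℝ) (b : Fin n → ℝ) (i : Fin n) : ℝ :=
  max (mcsh ρ b i) (Finset.univ.sup' ⟨i, Finset.mem_univ i⟩ (fun j => ρ i j - mcsh ρ b j))

lemma mcsh_lip {n : ℕ} {ρ : Fin n → Fin n → ℝ} (hρ : IsDistMatrix ρ) (b : Fin n → ℝ)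
    (i j : Fin n) : mcsh ρ b i ≤ mcsh ρ b j + ρ i j := by
  obtain ⟨l, -, hl⟩ := Finset.exists_mem_eq_inf' (⟨j, Finset.mem_univ j⟩ :
    (Finset.univ : Finset (Fin n)).Nonempty) (fun l => b l + ρ j l)
  have h1 : mcsh ρ b i ≤ b l + ρ i l := Finset.inf'_le _ (Finset.mem_univ l)
  have h2 : ρ i l ≤ ρ i j + ρ j l := hρ.2.2.2 i l j
  have : mcsh ρ b j = b l + ρ j l := hl
  linarith

lemma kat_lip {n : ℕ} {ρ : Fin n → Fin n → ℝ} (hρ : IsDistMatrix ρ) (b : Fin n → ℝ)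
    (i j : Fin n) : kat ρ b i ≤ kat ρ b j + ρ i j := by
  unfold kat
  apply max_le
  · calc mcsh ρ b i ≤ mcsh ρ b j + ρ i j := mcsh_lip hρ b i j
    _ ≤ _ := by
        have := le_max_left (mcsh ρ b j)
          (Finset.univ.sup' ⟨j, Finset.mem_univ j⟩ (fun k => ρ j k - mcsh ρ b k))
        linarith
  · apply Finset.sup'_le
    intro k _
    have h1 : ρ i k ≤ ρ i j + ρ j k := hρ.2.2.2 i k j
    have h2 : ρ j k - mcsh ρ b k ≤
        Finset.univ.sup' ⟨j, Finset.mem_univ j⟩ (fun k => ρ j k - mcsh ρ b k) :=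
      Finset.le_sup' (fun k => ρ j k - mcsh ρ b k) (Finset.mem_univ k)
    have h3 := le_max_right (mcsh ρ b j)
      (Finset.univ.sup' ⟨j, Finset.mem_univ j⟩ (fun k => ρ j k - mcsh ρ b k))
    linarith

lemma kat_admissible {n : ℕ} {ρ : Fin n → Fin n → ℝ} (hρ : IsDistMatrix ρ) (b : Fin n → ℝ) :
    Admissible ρ (kat ρ b) := by
  intro i j
  constructor
  · rw [abs_sub_le_iff]
    constructor
    · have := kat_lip hρ b i j; linarith
    · have := kat_lip hρ b j i; rw [hρ.2.1 i j]; linarith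
  · have h1 : ρ i j - mcsh ρ b j ≤ kat ρ b i :=
      le_trans (Finset.le_sup' (fun j => ρ i j - mcsh ρ b j) (Finset.mem_univ j)) (le_max_right _ _)
    have h2 : mcsh ρ b j ≤ kat ρ b j := le_max_left _ _
    linarith

lemma kat_close {n : ℕ} {ρ : Fin n → Fin n → ℝ} (hρ : IsDistMatrix ρ) {a b : Fin n → ℝ}
    (ha : Admissible ρ a) {ε : ℝ} (hb : ∀ i, |b i - a i| ≤ ε) (i : Fin n) :
    |kat ρ b i - a i| ≤ ε := by
  have glb : ∀ j, a j - ε ≤ mcsh ρ b j := by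
    intro j
    apply Finset.le_inf'
    intro l _
    have h1 := (abs_le.1 (hb l)).1
    have h2 := (abs_le.1 ((ha j l).1)).2
    linarith
  have gub : ∀ j, mcsh ρ b j ≤ a j + ε := by
    intro j
    have h1 : mcsh ρ b j ≤ b j + ρ j j := Finset.inf'_le _ (Finset.mem_univ j)
    have h2 := (abs_le.1 (hb j)).2
    rw [hρ.1 j] at h1
    linarith
  rw [abs_le]
  constructor
  · have := glb i
    have : a i - ε ≤ kat ρ b i := le_trans (glb i) (le_max_left _ _)
    linarith
  · have h : kat ρ b i ≤ a i + ε := by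
      apply max_le (gub i)
      apply Finset.sup'_le
      intro k _
      have h1 := glb k
      have h2 := (ha i k).2
      linarith
    linarith

lemma kat_continuous {n : ℕ} (q : Fin n → ℝ) (i : Fin n) :
    Continuous (fun f : ℕ → ℕ → ℝ => kat (corner f n) q i) := by
  have hm : ∀ j : Fin n, Continuous (fun f : ℕ → ℕ → ℝ => mcsh (corner f n) q j) := by
    intro j
    apply Continuous.finset_inf'_apply
    intro l _
    exact continuous_const.add ((continuous_apply (l : ℕ)).comp (continuous_apply (j : ℕ)))
  apply Continuous.max (hm i)
  apply Continuous.finset_sup'_apply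
  intro j _
  exact (((continuous_apply (j : ℕ)).comp (continuous_apply (i : ℕ)) : Continuous fun f : ℕ → ℕ → ℝ => f i j)).sub (hm j)

theorem stmt17 :
    IsGδ {r : {r : ℕ → ℕ → ℝ // IsInfDistMatrix r} | IsUniversal r.1} := by
  have hset : {r : {r : ℕ → ℕ → ℝ // IsInfDistMatrix r} | IsUniversal r.1} =
      ⋂ (n : ℕ) (k : ℕ) (q : Fin n → ℚ),
        {r : {r : ℕ → ℕ → ℝ // IsInfDistMatrix r} |
          ∃ m : ℕ, n ≤ m ∧ ∀ i : Fin n,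
            |r.1 i m - kat (corner r.1 n) (fun l => (q l : ℝ)) i| < 1 / ((k : ℝ) + 1)} := by
    ext r
    simp only [Set.mem_iInter, Set.mem_setOf_eq]
    constructor
    · intro hu n k q
      have hd : IsDistMatrix (corner r.1 n) :=
        ⟨fun i => r.2.1 i, fun i j => r.2.2.1 i j, fun i j => r.2.2.2.1 i j,
          fun i j l => r.2.2.2.2 i j l⟩
      exact hu n _ (kat_admissible hd _) (1 / ((k : ℝ) + 1)) (by positivity)
    · intro h n a ha ε hε
      have hd : IsDistMatrix (corner r.1 n) :=
        ⟨fun i => r.2.1 i, fun i j => r.2.2.1 i j, fun i j => r.2.2.2.1 i j,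
          fun i j l => r.2.2.2.2 i j l⟩
      obtain ⟨k, hk⟩ := exists_nat_one_div_lt (show (0:ℝ) < ε/2 by linarith)
      choose q hq1 hq2 using fun i : Fin n => exists_rat_btwn
        (show a i - ε/4 < a i by linarith)
      obtain ⟨m, hm, hmi⟩ := h n k q
      refine ⟨m, hm, fun i => ?_⟩
      have h1 := hmi i
      have h2 : |kat (corner r.1 n) (fun l => (q l : ℝ)) i - a i| ≤ ε/4 :=
        kat_close hd ha (fun j => by
          rw [abs_le]
          constructor <;> [linarith [hq1 j, hq2 j]; linarith [hq1 j, hq2 j]]) i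
      have h3 := abs_sub_le (r.1 i m) (kat (corner r.1 n) (fun l => (q l : ℝ)) i) (a i)
      linarith
  rw [hset]
  refine IsGδ.iInter fun n => IsGδ.iInter fun k => IsGδ.iInter fun q => IsOpen.isGδ ?_
  have heq : {r : {r : ℕ → ℕ → ℝ // IsInfDistMatrix r} |
        ∃ m : ℕ, n ≤ m ∧ ∀ i : Fin n,
          |r.1 i m - kat (corner r.1 n) (fun l => (q l : ℝ)) i| < 1 / ((k : ℝ) + 1)} =
      Subtype.val ⁻¹' (⋃ (m : ℕ) (_ : n ≤ m), ⋂ i : Fin n,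
        {f : ℕ → ℕ → ℝ | |f i m - kat (corner f n) (fun l => (q l : ℝ)) i| < 1 / ((k : ℝ) + 1)}) := by
    ext r
    simp only [Set.mem_setOf_eq, Set.mem_preimage, Set.mem_iUnion, Set.mem_iInter,
      Set.mem_setOf_eq]
    constructor
    · rintro ⟨m, hm, hi⟩; exact ⟨m, hm, hi⟩
    · rintro ⟨m, hm, hi⟩; exact ⟨m, hm, hi⟩
  rw [heq]
  apply IsOpen.preimage continuous_subtype_val
  apply isOpen_iUnion
  intro m
  apply isOpen_iUnion
  intro _
  apply isOpen_iInter_of_finite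
  intro i
  have hg : Continuous (fun f : ℕ → ℕ → ℝ =>
      |f i m - kat (corner f n) (fun l => (q l : ℝ)) i|) :=
    (((continuous_apply m).comp (continuous_apply (i : ℕ)) : Continuous fun f : ℕ → ℕ → ℝ => f i m).sub
      (kat_continuous _ i)).abs
  exact isOpen_lt hg continuous_const
end

section
/- If r is a universal infinite distance matrix, then the metric completion of (ℕ, r) is a Polish space into which every finite metric space embeds isometrically extending any partial isometry: for any finite distance matrix q of order N whose n×n NW-corner equals p_n(r) (n < N) and any ε > 0, there exist natural numbers i_{n+1},...,i_N such that the distance matrix of the points 1,...,n, i_{n+1},...,i_N differs from q in each entry by less than ε. -/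
lemma extend_point (r : ℕ → ℕ → ℝ) (hr : IsInfDistMatrix r) (hu : IsUniversal r)
    (m' : ℕ) (hm' : 0 < m') (ψ : Fin m' → ℕ) (a : Fin m' → ℝ) (D η : ℝ)
    (hD : 0 ≤ D) (hη : 0 < η)
    (h0 : ∀ k, 0 ≤ a k)
    (h1 : ∀ k l, r (ψ k) (ψ l) ≤ a k + a l + D)
    (h2 : ∀ k l, |a k - a l| ≤ r (ψ k) (ψ l) + D) :
    ∃ p : ℕ, ∀ k, |r (ψ k) p - a k| < D + η := by
  obtain ⟨hdiag, hsymm, hnn, htri⟩ := hr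
  haveI : Nonempty (Fin m') := ⟨⟨0, hm'⟩⟩
  set A : Fin m' → ℝ :=
    fun k => D + Finset.univ.inf' Finset.univ_nonempty (fun j => a j + r (ψ k) (ψ j)) with hA
  have hinfle : ∀ (k j : Fin m'),
      Finset.univ.inf' Finset.univ_nonempty (fun j' => a j' + r (ψ k) (ψ j'))
        ≤ a j + r (ψ k) (ψ j) :=
    fun k j => Finset.inf'_le _ (Finset.mem_univ j)
  have hAle : ∀ k, A k ≤ a k + D := by
    intro k
    have h := hinfle k k
    rw [hdiag] at h
    simp only [hA]
    linarith
  have hAge : ∀ k, a k ≤ A k := by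
    intro k
    have h : a k - D ≤ Finset.univ.inf' Finset.univ_nonempty
        (fun j => a j + r (ψ k) (ψ j)) := by
      apply Finset.le_inf'
      intro j _
      have h2' := (abs_le.mp (h2 k j)).2
      linarith
    simp only [hA]
    linarith
  have hALip : ∀ k l, A k ≤ A l + r (ψ k) (ψ l) := by
    intro k l
    obtain ⟨j, -, hj⟩ := Finset.exists_mem_eq_inf' (Finset.univ_nonempty)
      (fun j => a j + r (ψ l) (ψ j))
    have h3 : A k ≤ D + (a j + r (ψ k) (ψ j)) := by
      have := hinfle k j; simp only [hA]; linarith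
    have h4 := htri (ψ k) (ψ j) (ψ l)
    have h5 : A l = D + (a j + r (ψ l) (ψ j)) := by simp only [hA]; rw [hj]
    linarith
  have hAup : ∀ k l, r (ψ k) (ψ l) ≤ A k + A l := by
    intro k l
    obtain ⟨j, -, hj⟩ := Finset.exists_mem_eq_inf' (Finset.univ_nonempty)
      (fun j' => a j' + r (ψ k) (ψ j'))
    obtain ⟨j', -, hj'⟩ := Finset.exists_mem_eq_inf' (Finset.univ_nonempty)
      (fun j'' => a j'' + r (ψ l) (ψ j''))
    have e1 : A k = D + (a j + r (ψ k) (ψ j)) := by simp only [hA]; rw [hj]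
    have e2 : A l = D + (a j' + r (ψ l) (ψ j')) := by simp only [hA]; rw [hj']
    have t1 := htri (ψ k) (ψ l) (ψ j)
    have t2 := htri (ψ j) (ψ l) (ψ j')
    have h1' := h1 j j'
    have s1 := hsymm (ψ j) (ψ k)
    have s2 := hsymm (ψ j') (ψ l)
    rw [e1, e2]
    linarith
  -- extend A to a Katetov function on an initial segment
  set n' : ℕ := (Finset.univ.sup fun k => ψ k) + 1 with hn'
  have hψlt : ∀ k, ψ k < n' :=
    fun k => Nat.lt_succ_of_le (Finset.le_sup (Finset.mem_univ k))
  set b : Fin n' → ℝ :=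
    fun i => Finset.univ.inf' Finset.univ_nonempty (fun k => A k + r i (ψ k)) with hb
  have hble : ∀ (i : Fin n') (k : Fin m'), b i ≤ A k + r i (ψ k) :=
    fun i k => Finset.inf'_le _ (Finset.mem_univ k)
  have hbLip : ∀ i j : Fin n', b i ≤ b j + r (i : ℕ) (j : ℕ) := by
    intro i j
    obtain ⟨k, -, hk⟩ := Finset.exists_mem_eq_inf' (Finset.univ_nonempty)
      (fun k => A k + r (j : ℕ) (ψ k))
    have h3 := hble i k
    have h4 := htri (i : ℕ) (ψ k) (j : ℕ)
    have hs := hsymm (ψ k) (j : ℕ)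
    have e : b j = A k + r (j : ℕ) (ψ k) := by simp only [hb]; rw [hk]
    rw [e]
    linarith
  have hbup : ∀ i j : Fin n', r (i : ℕ) (j : ℕ) ≤ b i + b j := by
    intro i j
    obtain ⟨k, -, hk⟩ := Finset.exists_mem_eq_inf' (Finset.univ_nonempty)
      (fun k => A k + r (i : ℕ) (ψ k))
    obtain ⟨k', -, hk'⟩ := Finset.exists_mem_eq_inf' (Finset.univ_nonempty)
      (fun k => A k + r (j : ℕ) (ψ k))
    have e1 : b i = A k + r (i : ℕ) (ψ k) := by simp only [hb]; rw [hk]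
    have e2 : b j = A k' + r (j : ℕ) (ψ k') := by simp only [hb]; rw [hk']
    have t1 := htri (i : ℕ) (j : ℕ) (ψ k)
    have t2 := htri (ψ k) (j : ℕ) (ψ k')
    have up := hAup k k'
    have s2 := hsymm (ψ k') (j : ℕ)
    rw [e1, e2]
    linarith
  have hbadm : Admissible (corner r n') b := by
    intro i j
    constructor
    · rw [abs_sub_le_iff]
      have := hbLip i j
      have := hbLip j i
      have := hsymm (i : ℕ) (j : ℕ)
      constructor <;> · simp only [corner]; linarith
    · exact hbup i j
  have hbψ : ∀ k, b ⟨ψ k, hψlt k⟩ = A k := by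
    intro k
    have h3 := hble ⟨ψ k, hψlt k⟩ k
    rw [show r ((⟨ψ k, hψlt k⟩ : Fin n') : ℕ) (ψ k) = 0 from hdiag _] at h3
    have h4 : A k ≤ b ⟨ψ k, hψlt k⟩ := by
      apply Finset.le_inf'
      intro l _
      have := hALip k l
      linarith
    linarith
  obtain ⟨p, -, hp⟩ := hu n' b hbadm η hη
  refine ⟨p, fun k => ?_⟩
  have h5 := hp ⟨ψ k, hψlt k⟩
  rw [hbψ k] at h5
  have h6 : |A k - a k| ≤ D := by
    rw [abs_le]
    constructor
    · have := hAge k; linarith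
    · have := hAle k; linarith
  calc |r (ψ k) p - a k| ≤ |r (ψ k) p - A k| + |A k - a k| := abs_sub_le _ _ _
    _ < η + D := by
        have : r ((⟨ψ k, hψlt k⟩ : Fin n') : ℕ) p = r (ψ k) p := rfl
        rw [this] at h5
        linarith
    _ = D + η := by ring

theorem stmt18 (r : ℕ → ℕ → ℝ) (hr : IsInfDistMatrix r) (hu : IsUniversal r)
    {n N : ℕ} (hnN : n < N) (q : Fin N → Fin N → ℝ) (hq : IsDistMatrix q)
    (hcorner : ∀ i j : Fin n, q (Fin.castLE hnN.le i) (Fin.castLE hnN.le j) = r i j) :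
    ∀ ε > (0 : ℝ), ∃ φ : Fin N → ℕ,
      (∀ i : Fin n, φ (Fin.castLE hnN.le i) = (i : ℕ)) ∧
      ∀ k s : Fin N, |r (φ k) (φ s) - q k s| < ε := by
  intro ε hε
  obtain ⟨hqdiag, hqsymm, hqnn, hqtri⟩ := hq
  have hrdiag := hr.1
  have hrsymm := hr.2.1
  set η : ℝ := ε / (N + 1) with hηdef
  have hN1 : (0:ℝ) < (N:ℝ) + 1 := by positivity
  have hη : 0 < η := by positivity
  have key : ∀ t (ht : n + t ≤ N), ∃ ψ : Fin (n + t) → ℕ,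
      (∀ i : Fin n, ψ (Fin.castLE (by omega) i) = (i : ℕ)) ∧
      ∀ k l : Fin (n + t),
        |r (ψ k) (ψ l) - q (Fin.castLE ht k) (Fin.castLE ht l)| ≤ t * η := by
    intro t
    induction t with
    | zero =>
      intro ht
      refine ⟨fun i => (i : ℕ), fun i => rfl, fun k l => ?_⟩
      have e : q (Fin.castLE ht k) (Fin.castLE ht l) = r (k : ℕ) (l : ℕ) := by
        have := hcorner ⟨(k : ℕ), by omega⟩ ⟨(l : ℕ), by omega⟩
        convert this using 2 <;> exact Fin.ext rfl
      rw [e]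
      simp
    | succ t ih =>
      intro ht
      have hle : n + t ≤ N := by omega
      have hm'N : n + t < N := by omega
      obtain ⟨ψ, hψpre, hψerr⟩ := ih hle
      by_cases hm0 : n + t = 0
      · have hn0 : n = 0 := by omega
        refine ⟨fun _ => 0, fun i => absurd i.isLt (by omega), fun k l => ?_⟩
        have hk : (k : ℕ) = 0 := by omega
        have hl : (l : ℕ) = 0 := by omega
        have e1 : Fin.castLE ht k = Fin.castLE ht l := Fin.ext (by simp [hk, hl])
        rw [e1, hqdiag, hrdiag]
        simp
        positivity
      · have hm' : 0 < n + t := Nat.pos_of_ne_zero hm0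
        have hD : (0:ℝ) ≤ t * η := by positivity
        obtain ⟨p, hp⟩ := extend_point r hr hu (n + t) hm' ψ
          (fun k => q (Fin.castLE hle k) ⟨n + t, hm'N⟩) (t * η) η hD hη
          (fun k => hqnn _ _)
          (by
            intro k l
            obtain ⟨h5a, h5b⟩ := abs_le.mp (hψerr k l)
            have h6 := hqtri (Fin.castLE hle k) (Fin.castLE hle l) ⟨n + t, hm'N⟩
            have h7 := hqsymm (⟨n + t, hm'N⟩ : Fin N) (Fin.castLE hle l)
            linarith)
          (by
            intro k l
            obtain ⟨h5a, h5b⟩ := abs_le.mp (hψerr k l)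
            have h6 := hqtri (Fin.castLE hle k) ⟨n + t, hm'N⟩ (Fin.castLE hle l)
            have h6' := hqtri (Fin.castLE hle l) ⟨n + t, hm'N⟩ (Fin.castLE hle k)
            have h7 := hqsymm (⟨n + t, hm'N⟩ : Fin N) (Fin.castLE hle l)
            have h7' := hqsymm (⟨n + t, hm'N⟩ : Fin N) (Fin.castLE hle k)
            have h8 := hqsymm (Fin.castLE hle k) (Fin.castLE hle l)
            rw [abs_le]
            constructor <;> linarith)
        -- build the extended map
        refine ⟨fun k => if h : (k : ℕ) < n + t then ψ ⟨k, h⟩ else p, ?_, ?_⟩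
        · intro i
          have hi : ((Fin.castLE (by omega : n ≤ n + (t+1)) i : Fin (n + (t+1))) : ℕ) < n + t := by
            simp only [Fin.coe_castLE]; omega
          simp only [dif_pos hi]
          have : (⟨((Fin.castLE (by omega : n ≤ n + (t+1)) i : Fin (n + (t+1))) : ℕ), hi⟩ : Fin (n+t))
              = Fin.castLE (by omega) i := Fin.ext rfl
          rw [this]
          exact hψpre i
        · intro k l
          have hb : ((t:ℝ) + 1) * η = t * η + η := by ring
          by_cases hk : (k : ℕ) < n + t <;> by_cases hl : (l : ℕ) < n + t
          · simp only [dif_pos hk, dif_pos hl]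
            have e1 : Fin.castLE ht k = Fin.castLE hle (⟨k, hk⟩ : Fin (n+t)) := Fin.ext rfl
            have e2 : Fin.castLE ht l = Fin.castLE hle (⟨l, hl⟩ : Fin (n+t)) := Fin.ext rfl
            rw [e1, e2]
            calc |r (ψ ⟨k, hk⟩) (ψ ⟨l, hl⟩) - _| ≤ t * η := hψerr _ _
              _ ≤ (t + 1 : ℕ) * η := by push_cast; nlinarith
          · simp only [dif_pos hk, dif_neg hl]
            have hlv : (l : ℕ) = n + t := by omega
            have e1 : Fin.castLE ht k = Fin.castLE hle (⟨k, hk⟩ : Fin (n+t)) := Fin.ext rfl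
            have e2 : Fin.castLE ht l = (⟨n + t, hm'N⟩ : Fin N) := Fin.ext hlv
            rw [e1, e2]
            have := hp ⟨k, hk⟩
            push_cast
            linarith [le_of_lt this]
          · simp only [dif_neg hk, dif_pos hl]
            have hkv : (k : ℕ) = n + t := by omega
            have e1 : Fin.castLE ht k = (⟨n + t, hm'N⟩ : Fin N) := Fin.ext hkv
            have e2 : Fin.castLE ht l = Fin.castLE hle (⟨l, hl⟩ : Fin (n+t)) := Fin.ext rfl
            rw [e1, e2]
            have h9 := hp ⟨l, hl⟩
            have h10 := hrsymm p (ψ ⟨l, hl⟩)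
            have h11 := hqsymm (⟨n + t, hm'N⟩ : Fin N) (Fin.castLE hle (⟨l, hl⟩ : Fin (n+t)))
            rw [abs_sub_lt_iff] at h9
            rw [h10, h11]
            rw [abs_sub_le_iff]
            push_cast
            constructor <;> linarith [h9.1, h9.2]
          · simp only [dif_neg hk, dif_neg hl]
            have e1 : Fin.castLE ht k = Fin.castLE ht l :=
              Fin.ext (by simp only [Fin.coe_castLE]; omega)
            rw [e1, hqdiag, hrdiag]
            simp
            positivity
  obtain ⟨ψ, hpre, herr⟩ := key (N - n) (by omega)
  refine ⟨fun k => ψ ⟨k, by omega⟩, ?_, ?_⟩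
  · intro i
    exact hpre i
  · intro k s
    have h : |r (ψ ⟨k, by omega⟩) (ψ ⟨s, by omega⟩) - q k s| ≤ (N - n : ℕ) * η :=
      herr ⟨k, by omega⟩ ⟨s, by omega⟩
    calc |r (ψ ⟨k, by omega⟩) (ψ ⟨s, by omega⟩) - q k s| ≤ (N - n : ℕ) * η := h
      _ ≤ (N : ℝ) * η := by
          have : ((N - n : ℕ) : ℝ) ≤ (N : ℝ) := by
            exact_mod_cast Nat.sub_le N n
          nlinarith
      _ < ((N : ℝ) + 1) * η := by nlinarith
      _ = ε := by rw [hηdef]; field_simp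
end

section
/- (Gromov–Vershik reconstruction, ball-measure step) Let (X, ρ, μ) be a metric triple with Borel probability measure μ. For μ^ℕ-almost every sequence (x_1, x_2, ...) of i.i.d. μ-distributed points, for every i and every l > 0 with μ(boundary of the ball B^l(x_i)) = 0, one has μ(B^l(x_i)) = lim_{n→∞} (1/n) Σ_{k=1}^n 1_{[0,l)}(ρ(x_k, x_i)), where B^l(x) = {z : ρ(x,z) < l}. -/
open MeasureTheory ProbabilityTheory Filter

/-- SLLN for indicators: the empirical frequency of a measurable set converges a.s. -/
lemma slln_indicator {X : Type*} [MeasurableSpace X]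
    {Ω : Type*} [MeasurableSpace Ω] (P : Measure Ω) [IsProbabilityMeasure P]
    (μ : Measure X) [IsProbabilityMeasure μ]
    (x : ℕ → Ω → X) (hmeas : ∀ k, Measurable (x k))
    (hindep : iIndepFun x P)
    (hdist : ∀ k, P.map (x k) = μ) (S : Set X) (hS : MeasurableSet S) :
    ∀ᵐ ω ∂P, Tendsto
      (fun n : ℕ => (∑ k ∈ Finset.range n, S.indicator (fun _ => (1:ℝ)) (x k ω)) / n)
      atTop (nhds (μ S).toReal) := by
  have hind : Measurable (S.indicator (fun _ => (1:ℝ))) := measurable_const.indicator hS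
  have hbd : ∀ z, ‖S.indicator (fun _ => (1:ℝ)) z‖ ≤ 1 := by
    intro z; by_cases h : z ∈ S <;> simp [Set.indicator_apply, h]
  have hint : Integrable (fun ω => S.indicator (fun _ => (1:ℝ)) (x 0 ω)) P := by
    refine Integrable.mono' (integrable_const 1)
      ((hind.comp (hmeas 0)).aestronglyMeasurable) ?_
    exact Filter.Eventually.of_forall fun ω => hbd _
  have hpair : Pairwise (Function.onFun (IndepFun · · P)
      fun k ω => S.indicator (fun _ => (1:ℝ)) (x k ω)) := by
    intro i j hij
    exact (hindep.indepFun hij).comp hind hind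
  have hident : ∀ k, IdentDistrib (fun ω => S.indicator (fun _ => (1:ℝ)) (x k ω))
      (fun ω => S.indicator (fun _ => (1:ℝ)) (x 0 ω)) P P := by
    intro k
    have hb : IdentDistrib (x k) (x 0) P P :=
      ⟨(hmeas k).aemeasurable, (hmeas 0).aemeasurable, (hdist k).trans (hdist 0).symm⟩
    exact hb.comp hind
  have h := strong_law_ae_real _ hint hpair hident
  have heq : ∫ ω, S.indicator (fun _ => (1:ℝ)) (x 0 ω) ∂P = (μ S).toReal := by
    rw [← integral_map (hmeas 0).aemeasurable hind.aestronglyMeasurable, hdist 0]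
    exact integral_indicator_one (μ := μ) hS
  rwa [heq] at h

/-- Lower bound for empirical frequencies of open sets. -/
lemma aux_lower {X : Type*} [MetricSpace X] [MeasurableSpace X] [BorelSpace X]
    (μ : Measure X) [IsProbabilityMeasure μ] (B : ℕ → Set X)
    (hBopen : ∀ i, IsOpen (B i))
    (hbase : ∀ (U : Set X), IsOpen U → ∀ z ∈ U, ∃ i, z ∈ B i ∧ B i ⊆ U)
    (y : ℕ → X)
    (H : ∀ s : Finset ℕ, Tendsto
      (fun n : ℕ => (∑ k ∈ Finset.range n, (⋃ i ∈ s, B i).indicator (fun _ => (1:ℝ)) (y k)) / n)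
      atTop (nhds (μ (⋃ i ∈ s, B i)).toReal))
    (U : Set X) (hU : IsOpen U) (ε : ℝ) (hε : 0 < ε) :
    ∀ᶠ n : ℕ in atTop,
      (μ U).toReal - ε < (∑ k ∈ Finset.range n, U.indicator (fun _ => (1:ℝ)) (y k)) / n := by
  classical
  set s : ℕ → Finset ℕ := fun j => (Finset.range j).filter (fun i => B i ⊆ U) with hs
  have hWU : ∀ j, (⋃ i ∈ s j, B i) ⊆ U := by
    intro j
    refine Set.iUnion₂_subset fun i hi => ?_
    exact (Finset.mem_filter.mp hi).2
  have hmono : Monotone fun j => (⋃ i ∈ s j, B i) := by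
    intro a b hab
    refine Set.iUnion₂_mono' fun i hi => ?_
    refine ⟨i, ?_, subset_rfl⟩
    simp only [hs, Finset.mem_filter, Finset.mem_range] at hi ⊢
    exact ⟨lt_of_lt_of_le hi.1 hab, hi.2⟩
  have hcup : (⋃ j, ⋃ i ∈ s j, B i) = U := by
    apply Set.Subset.antisymm
    · exact Set.iUnion_subset fun j => hWU j
    · intro z hz
      obtain ⟨i, hzi, hiU⟩ := hbase U hU z hz
      refine Set.mem_iUnion.mpr ⟨i + 1, Set.mem_iUnion₂.mpr ⟨i, ?_, hzi⟩⟩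
      simp only [hs, Finset.mem_filter, Finset.mem_range]
      exact ⟨Nat.lt_succ_self i, hiU⟩
  have htend : Tendsto (fun j => μ (⋃ i ∈ s j, B i)) atTop (nhds (μ U)) := by
    have := tendsto_measure_iUnion_atTop (μ := μ) hmono
    rwa [hcup] at this
  have htendR : Tendsto (fun j => (μ (⋃ i ∈ s j, B i)).toReal) atTop (nhds (μ U).toReal) :=
    (ENNReal.tendsto_toReal (measure_ne_top μ U)).comp htend
  have : ∀ᶠ j in atTop, (μ U).toReal - ε / 2 < (μ (⋃ i ∈ s j, B i)).toReal := by
    apply htendR.eventually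
    apply eventually_gt_nhds
    linarith
  obtain ⟨j, hj⟩ := this.exists
  have hmono2 : ∀ n : ℕ,
      (∑ k ∈ Finset.range n, (⋃ i ∈ s j, B i).indicator (fun _ => (1:ℝ)) (y k)) / n ≤
      (∑ k ∈ Finset.range n, U.indicator (fun _ => (1:ℝ)) (y k)) / n := by
    intro n
    apply div_le_div_of_nonneg_right ?_ (Nat.cast_nonneg n)
    apply Finset.sum_le_sum
    intro k _
    exact Set.indicator_le_indicator_of_subset (hWU j) (fun _ => zero_le_one) (y k)
  have hev : ∀ᶠ n : ℕ in atTop, (μ U).toReal - ε <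
      (∑ k ∈ Finset.range n, (⋃ i ∈ s j, B i).indicator (fun _ => (1:ℝ)) (y k)) / n := by
    apply (H (s j)).eventually
    apply eventually_gt_nhds
    linarith
  filter_upwards [hev] with n hn
  exact lt_of_lt_of_le hn (hmono2 n)

/-- Gromov–Vershik reconstruction, ball-measure step: for an i.i.d. sequence of
`μ`-distributed points of a metric triple, almost surely the empirical frequency
of points falling into a ball `B^l(x_i)` whose boundary is `μ`-null converges to
the measure of that ball. -/
theorem stmt19 {X : Type*} [MetricSpace X] [CompleteSpace X]
    [TopologicalSpace.SeparableSpace X] [MeasurableSpace X] [BorelSpace X]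
    (μ : Measure X) [IsProbabilityMeasure μ]
    {Ω : Type*} [MeasurableSpace Ω] (P : Measure Ω) [IsProbabilityMeasure P]
    (x : ℕ → Ω → X) (hmeas : ∀ k, Measurable (x k))
    (hindep : iIndepFun x P)
    (hdist : ∀ k, P.map (x k) = μ) :
    ∀ᵐ ω ∂P, ∀ i : ℕ, ∀ l : ℝ, 0 < l →
      μ (frontier (Metric.ball (x i ω) l)) = 0 →
      Tendsto
        (fun n : ℕ =>
          (∑ k ∈ Finset.range n, if dist (x k ω) (x i ω) < l then (1 : ℝ) else 0) / n)
        atTop (nhds (μ (Metric.ball (x i ω) l)).toReal) := by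
  classical
  rcases isEmpty_or_nonempty X with hX | hX
  · have : IsEmpty Ω := ⟨fun ω => hX.false (x 0 ω)⟩
    exact Filter.Eventually.of_forall fun ω => isEmptyElim ω
  set u : ℕ → X := TopologicalSpace.denseSeq X with hu_def
  have hu : DenseRange u := TopologicalSpace.denseRange_denseSeq X
  set e : ℕ ≃ ℕ × ℚ := (Denumerable.eqv (ℕ × ℚ)).symm with he_def
  set B : ℕ → Set X := fun i => Metric.ball (u (e i).1) ((e i).2 : ℝ) with hB_def
  have hBopen : ∀ i, IsOpen (B i) := fun i => Metric.isOpen_ball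
  have hbase : ∀ (U : Set X), IsOpen U → ∀ z ∈ U, ∃ i, z ∈ B i ∧ B i ⊆ U := by
    intro U hU z hz
    obtain ⟨r, hr, hball⟩ := Metric.isOpen_iff.mp hU z hz
    obtain ⟨m, hm⟩ := Metric.denseRange_iff.mp hu z (r / 4) (by linarith)
    obtain ⟨q, hq1, hq2⟩ := exists_rat_btwn (show r / 4 < r / 2 by linarith)
    refine ⟨e.symm (m, q), ?_, ?_⟩
    · show z ∈ Metric.ball (u (e (e.symm (m, q))).1) ((e (e.symm (m, q))).2 : ℝ)
      simp only [Equiv.apply_symm_apply]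
      exact Metric.mem_ball.mpr (lt_trans hm hq1)
    · intro w hw
      simp only [hB_def, Equiv.apply_symm_apply] at hw
      apply hball
      have h1 : dist w (u m) < (q : ℝ) := Metric.mem_ball.mp hw
      have h2 : dist (u m) z < r / 4 := by rw [dist_comm]; exact hm
      have h3 : (q : ℝ) < r / 2 := hq2
      refine Metric.mem_ball.mpr ?_
      calc dist w z ≤ dist w (u m) + dist (u m) z := dist_triangle _ _ _
        _ < r := by linarith
  have hmeasV : ∀ s : Finset ℕ, MeasurableSet (⋃ i ∈ s, B i) :=
    fun s => MeasurableSet.biUnion s.countable_toSet fun i _ => measurableSet_ball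
  have hae : ∀ᵐ ω ∂P, ∀ s : Finset ℕ, Tendsto
      (fun n : ℕ =>
        (∑ k ∈ Finset.range n, (⋃ i ∈ s, B i).indicator (fun _ => (1:ℝ)) (x k ω)) / n)
      atTop (nhds (μ (⋃ i ∈ s, B i)).toReal) := by
    rw [ae_all_iff]
    intro s
    exact slln_indicator P μ x hmeas hindep hdist _ (hmeasV s)
  filter_upwards [hae] with ω H i l hl hfr
  set c := x i ω with hc
  set E := Metric.ball c l with hE
  have hEopen : IsOpen E := Metric.isOpen_ball
  set a := (μ E).toReal with ha
  have hfun : ∀ n : ℕ,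
      (∑ k ∈ Finset.range n, if dist (x k ω) c < l then (1:ℝ) else 0) =
      ∑ k ∈ Finset.range n, E.indicator (fun _ => (1:ℝ)) (x k ω) := by
    intro n
    refine Finset.sum_congr rfl fun k _ => ?_
    by_cases h : dist (x k ω) c < l <;>
      simp [hE, Set.indicator_apply, Metric.mem_ball, h]
  simp only [hfun]
  -- measure of closure equals measure of ball, by the null frontier
  have hclE : μ (closure E) = μ E := by
    apply le_antisymm
    · have hsub : closure E ⊆ E ∪ frontier E := by
        intro z hz
        by_cases h : z ∈ E
        · exact Or.inl h
        · exact Or.inr ⟨hz, by rwa [hEopen.interior_eq]⟩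
      calc μ (closure E) ≤ μ (E ∪ frontier E) := measure_mono hsub
        _ ≤ μ E + μ (frontier E) := measure_union_le _ _
        _ = μ E := by rw [hfr, add_zero]
    · exact measure_mono subset_closure
  have hUc : (μ (interior Eᶜ)).toReal = 1 - a := by
    rw [interior_compl,
      measure_compl isClosed_closure.measurableSet (measure_ne_top _ _),
      hclE, measure_univ, ENNReal.toReal_sub_of_le prob_le_one ENNReal.one_ne_top,
      ENNReal.toReal_one]
  rw [Metric.tendsto_atTop]
  intro ε hε
  have hlow := aux_lower μ B hBopen hbase (fun k => x k ω) H E hEopen (ε / 2) (by linarith)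
  have hup := aux_lower μ B hBopen hbase (fun k => x k ω) H (interior Eᶜ) isOpen_interior
    (ε / 2) (by linarith)
  rw [hUc] at hup
  have hadd : ∀ n : ℕ, 1 ≤ n →
      (∑ k ∈ Finset.range n, E.indicator (fun _ => (1:ℝ)) (x k ω)) / n +
      (∑ k ∈ Finset.range n, Eᶜ.indicator (fun _ => (1:ℝ)) (x k ω)) / n = 1 := by
    intro n hn
    rw [← add_div, ← Finset.sum_add_distrib]
    have hone : ∀ k, E.indicator (fun _ => (1:ℝ)) (x k ω) +
        Eᶜ.indicator (fun _ => (1:ℝ)) (x k ω) = 1 := by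
      intro k
      by_cases h : x k ω ∈ E <;> simp [Set.indicator_apply, h]
    simp only [hone, Finset.sum_const, Finset.card_range, nsmul_eq_mul, mul_one]
    exact div_self (by exact_mod_cast Nat.one_le_iff_ne_zero.mp hn)
  have hmono3 : ∀ n : ℕ,
      (∑ k ∈ Finset.range n, (interior Eᶜ).indicator (fun _ => (1:ℝ)) (x k ω)) / n ≤
      (∑ k ∈ Finset.range n, Eᶜ.indicator (fun _ => (1:ℝ)) (x k ω)) / n := by
    intro n
    apply div_le_div_of_nonneg_right ?_ (Nat.cast_nonneg n)
    refine Finset.sum_le_sum fun k _ => ?_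
    exact Set.indicator_le_indicator_of_subset interior_subset (fun _ => zero_le_one) _
  have hcomb := (hlow.and hup).and (eventually_ge_atTop 1)
  obtain ⟨N, hN⟩ := eventually_atTop.mp hcomb
  refine ⟨N, fun n hn => ?_⟩
  obtain ⟨⟨h1, h2⟩, h3⟩ := hN n hn
  have h4 := hadd n h3
  have h5 := hmono3 n
  rw [Real.dist_eq, abs_lt]
  constructor <;> linarith
end
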